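/- arXiv:2006.00466 — 3 statements merged into one kernel-verified Lean document; each statement's English description precedes it below -/
import Mathlib

section
/- Let p ≥ 5 be a prime. If the alternating group A_p on p letters has a solvable p-complement, then p = 5. -/
open Equiv MulAction

private lemma aux_notmem {n : ℕ} (hn : 5 ≤ n) (s : Finset (Fin n)) (hs : s.card ≤ 4) :
    ∃ c : Fin n, c ∉ s := by
  have h1 : 0 < sᶜ.card := by
    rw [Finset.card_compl, Fintype.card_fin]; omega
  obtain ⟨c, hc⟩ := Finset.card_pos.mp h1
  exact ⟨c, Finset.mem_compl.mp hc⟩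

private lemma aux_alt_pretransitive {n : ℕ} (hn : 5 ≤ n) :
    MulAction.IsPretransitive ↥(alternatingGroup (Fin n)) (Fin n) := by
  constructor
  intro a b
  by_cases hab : a = b
  · exact ⟨1, by simp [hab]⟩
  · obtain ⟨c, hc⟩ := aux_notmem hn {a, b} (by
      have h1 := Finset.card_insert_le a ({b} : Finset (Fin n))
      simp only [Finset.card_singleton] at h1; omega)
    obtain ⟨d, hd⟩ := aux_notmem hn {a, b, c} (by
      have h1 := Finset.card_insert_le a ({b, c} : Finset (Fin n))
      have h2 := Finset.card_insert_le b ({c} : Finset (Fin n))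
      simp only [Finset.card_singleton] at h1 h2; omega)
    simp only [Finset.mem_insert, Finset.mem_singleton, not_or] at hc hd
    obtain ⟨hca, hcb⟩ := hc
    obtain ⟨hda, hdb, hdc⟩ := hd
    have hcd : c ≠ d := fun h => hdc h.symm
    have hmem : Equiv.swap a b * Equiv.swap c d ∈ alternatingGroup (Fin n) := by
      rw [Equiv.Perm.mem_alternatingGroup, Equiv.Perm.sign_mul,
        Equiv.Perm.sign_swap hab, Equiv.Perm.sign_swap hcd]
      norm_num
    refine ⟨⟨Equiv.swap a b * Equiv.swap c d, hmem⟩, ?_⟩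
    show (Equiv.swap a b * Equiv.swap c d) a = b
    rw [Equiv.Perm.mul_apply, Equiv.swap_apply_of_ne_of_ne (Ne.symm hca) (Ne.symm hda),
      Equiv.swap_apply_left]

private lemma aux_normal_eq_bot {p : ℕ} (hp : p.Prime) (h5 : 5 ≤ p)
    {N : Subgroup ↥(alternatingGroup (Fin p))} (hN : N.Normal)
    (hcard : ¬ p ∣ Nat.card N) : N = ⊥ := by
  classical
  by_contra hbot
  haveI := aux_alt_pretransitive h5
  haveI := hN
  obtain ⟨n, hn1⟩ := Subgroup.ne_bot_iff_exists_ne_one.mp hbot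
  have hmove : ∃ a : Fin p, (((n : ↥(alternatingGroup (Fin p))) : Equiv.Perm (Fin p))) a ≠ a := by
    by_contra h
    push_neg at h
    exact hn1 (Subtype.ext (Subtype.ext (Equiv.ext h)))
  obtain ⟨a, ha⟩ := hmove
  have hna : n • a ≠ a := ha
  set B : Set (Fin p) := MulAction.orbit N a with hB
  have hBblock : MulAction.IsBlock ↥(alternatingGroup (Fin p)) B :=
    MulAction.IsBlock.orbit_of_normal a
  have hane : a ∈ B := MulAction.mem_orbit_self a
  have hdvd : B.ncard ∣ p := by
    have := hBblock.ncard_dvd_card ⟨a, hane⟩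
    simpa [Nat.card_eq_fintype_card] using this
  have h2le : 2 ≤ B.ncard := by
    have hsub : ({n • a, a} : Set (Fin p)) ⊆ B := by
      rintro x (rfl | rfl)
      · exact MulAction.mem_orbit a n
      · exact hane
    calc 2 = ({n • a, a} : Set (Fin p)).ncard := (Set.ncard_pair hna).symm
    _ ≤ B.ncard := Set.ncard_le_ncard hsub (Set.toFinite B)
  have hBp : B.ncard = p := by
    rcases (Nat.Prime.eq_one_or_self_of_dvd hp _ hdvd) with h | h
    · omega
    · exact h
  apply hcard
  have h1 : Nat.card B = p := by rw [Nat.card_coe_set_eq, hBp]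
  have h2 : Nat.card B ∣ Nat.card ↥N := by
    rw [Nat.card_congr (MulAction.orbitEquivQuotientStabilizer N a)]
    exact Subgroup.index_dvd_card (H := MulAction.stabilizer ↥N a)
  rwa [h1] at h2

private lemma aux_ofSubtype_injective {α : Type*} [DecidableEq α] {q : α → Prop}
    [DecidablePred q] :
    Function.Injective (Equiv.Perm.ofSubtype : Equiv.Perm (Subtype q) →* Equiv.Perm α) := by
  intro f g h
  ext x
  have := congrArg (fun σ : Equiv.Perm α => σ (x : α)) h
  simp only [Equiv.Perm.ofSubtype_apply_coe] at this
  exact this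

private lemma aux_alt_not_solvable (α : Type*) [Fintype α] [DecidableEq α]
    (h5 : 5 ≤ Fintype.card α) : ¬ IsSolvable ↥(alternatingGroup α) := by
  intro hs
  haveI : Group.IsSolvable ↥(alternatingGroup α) := hs
  have hns : ¬ IsSolvable (Equiv.Perm α) := Equiv.Perm.not_solvable α (by
    rw [Cardinal.mk_fintype]; exact_mod_cast h5)
  exact hns (solvable_of_ker_le_range (alternatingGroup α).subtype Equiv.Perm.sign
    (by rw [Subgroup.range_subtype]; exact le_of_eq (alternatingGroup_eq_sign_ker).symm))


private lemma aux_final {G : Type*} [Group G] (H : Subgroup G) [Fintype (G ⧸ H)]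
    [DecidableEq (G ⧸ H)] (hsolv : IsSolvable H)
    (hinj : Function.Injective (MulAction.toPermHom G (G ⧸ H)))
    (halt : alternatingGroup (G ⧸ H) ≤ (MulAction.toPermHom G (G ⧸ H)).range)
    (hcard : 6 ≤ Fintype.card (G ⧸ H)) : False := by
  classical
  set φ := MulAction.toPermHom G (G ⧸ H) with hφ
  set pt : G ⧸ H := QuotientGroup.mk 1 with hpt
  have hcY : 5 ≤ Fintype.card {x : G ⧸ H // x ≠ pt} := by
    have h1 : Fintype.card {x : G ⧸ H // x ≠ pt} =
        Fintype.card (G ⧸ H) - Fintype.card {x : G ⧸ H // x = pt} :=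
      Fintype.card_subtype_compl _
    rw [h1, Fintype.card_subtype_eq]
    omega
  have hmem : ∀ u : ↥(alternatingGroup {x : G ⧸ H // x ≠ pt}),
      Equiv.Perm.ofSubtype (u : Equiv.Perm {x : G ⧸ H // x ≠ pt}) ∈ φ.range := by
    intro u
    apply halt
    rw [Equiv.Perm.mem_alternatingGroup, Equiv.Perm.sign_ofSubtype]
    exact Equiv.Perm.mem_alternatingGroup.mp u.2
  let j : ↥(alternatingGroup {x : G ⧸ H // x ≠ pt}) →* ↥φ.range :=
    MonoidHom.codRestrict (Equiv.Perm.ofSubtype.comp (alternatingGroup _).subtype) _ hmem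
  let e : G ≃* ↥φ.range := MonoidHom.ofInjective hinj
  let θ : ↥(alternatingGroup {x : G ⧸ H // x ≠ pt}) →* G := e.symm.toMonoidHom.comp j
  have hθφ : ∀ u, φ (θ u) = Equiv.Perm.ofSubtype (u : Equiv.Perm {x : G ⧸ H // x ≠ pt}) := by
    intro u
    have h1 : φ (e.symm (j u)) = ↑(e (e.symm (j u))) :=
      (MonoidHom.ofInjective_apply hinj).symm
    rw [MulEquiv.apply_symm_apply] at h1
    exact h1
  have hθH : ∀ u, θ u ∈ H := by
    intro u
    have h1 : (φ (θ u)) pt = pt := by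
      rw [hθφ u]
      exact Equiv.Perm.ofSubtype_apply_of_not_mem _ (by simp)
    have h2 : (θ u) • pt = pt := h1
    have h3 : QuotientGroup.mk (θ u • (1 : G)) = (QuotientGroup.mk 1 : G ⧸ H) := by
      rw [← MulAction.Quotient.smul_mk]
      exact h2
    have h4 := QuotientGroup.eq.mp h3
    simpa [smul_eq_mul] using h4
  let ψ := θ.codRestrict H hθH
  have hψinj : Function.Injective ψ := by
    intro u v huv
    have h1 : θ u = θ v := congrArg Subtype.val huv
    have h2 : j u = j v := e.symm.injective h1
    have h3 : Equiv.Perm.ofSubtype (u : Equiv.Perm {x : G ⧸ H // x ≠ pt})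
        = Equiv.Perm.ofSubtype (v : Equiv.Perm {x : G ⧸ H // x ≠ pt}) :=
      congrArg Subtype.val h2
    exact Subtype.ext (aux_ofSubtype_injective h3)
  haveI : Group.IsSolvable ↥H := hsolv
  have hs : IsSolvable ↥(alternatingGroup {x : G ⧸ H // x ≠ pt}) :=
    solvable_of_solvable_injective hψinj
  exact aux_alt_not_solvable _ hcY hs

/-- If `p ≥ 5` is a prime and the alternating group on `p` letters has a solvable
`p`-complement, then `p = 5`. -/
theorem alternating_solvable_p_complement (p : ℕ) (hp : p.Prime) (h5 : 5 ≤ p)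
    (H : Subgroup (alternatingGroup (Fin p))) (hsolv : IsSolvable H)
    (hindex : ∃ k : ℕ, H.index = p ^ k)
    (hcop : Nat.Coprime (Nat.card H) p) :
    p = 5 := by
  classical
  by_contra hne
  have hp7 : 7 ≤ p := by
    have h6 : p ≠ 6 := by rintro rfl; norm_num at hp
    omega
  haveI : Nontrivial (Fin p) :=
    ⟨⟨0, by omega⟩, ⟨1, by omega⟩, by simp [Fin.ext_iff]⟩
  -- cardinality facts
  have hcardG : 2 * Nat.card ↥(alternatingGroup (Fin p)) = Nat.factorial p := by
    rw [Nat.card_eq_fintype_card, two_mul_card_alternatingGroup, Fintype.card_perm,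
      Fintype.card_fin]
  have hpnot2 : Nat.Coprime p 2 :=
    (Nat.Prime.coprime_iff_not_dvd hp).mpr
      (fun hdvd => by have := Nat.le_of_dvd (by norm_num) hdvd; omega)
  have hpG : p ∣ Nat.card ↥(alternatingGroup (Fin p)) := by
    have h1 : p ∣ 2 * Nat.card ↥(alternatingGroup (Fin p)) := by
      rw [hcardG]; exact Nat.dvd_factorial (by omega) le_rfl
    exact (Nat.Coprime.dvd_of_dvd_mul_left hpnot2 h1)
  have hfact : Nat.factorial p = p * Nat.factorial (p-1) := by
    conv_lhs => rw [show p = (p - 1) + 1 by omega, Nat.factorial_succ]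
    congr 1
    omega
  have hnsq : ¬ p ^ 2 ∣ Nat.card ↥(alternatingGroup (Fin p)) := by
    intro h
    have h1 : p ^ 2 ∣ Nat.factorial p := dvd_trans h ⟨2, by rw [← hcardG]; ring⟩
    rw [hfact, pow_two] at h1
    have h2 : p ∣ Nat.factorial (p-1) := (Nat.mul_dvd_mul_iff_left (by omega : 0 < p)).mp h1
    have := (Nat.Prime.dvd_factorial hp).mp h2
    omega
  -- the index is p
  obtain ⟨k, hk⟩ := hindex
  have hmul : Nat.card ↥H * H.index = Nat.card ↥(alternatingGroup (Fin p)) :=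
    Subgroup.card_mul_index H
  have hpind : p ∣ H.index := by
    have h1 : p ∣ Nat.card ↥H * H.index := by rw [hmul]; exact hpG
    exact (Nat.Coprime.dvd_of_dvd_mul_left hcop.symm h1)
  have hk1 : k = 1 := by
    rcases Nat.lt_or_ge k 1 with h | h
    · interval_cases k
      rw [hk, pow_zero] at hpind
      have := Nat.le_of_dvd one_pos hpind
      omega
    rcases Nat.lt_or_ge k 2 with h' | h'
    · omega
    exfalso
    apply hnsq
    calc p ^ 2 ∣ H.index := by rw [hk]; exact pow_dvd_pow p h'
    _ ∣ Nat.card ↥(alternatingGroup (Fin p)) := ⟨Nat.card ↥H, by rw [← hmul]; ring⟩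
  have hidx : H.index = p := by rw [hk, hk1, pow_one]
  -- the coset action
  set φ := MulAction.toPermHom ↥(alternatingGroup (Fin p)) (↥(alternatingGroup (Fin p)) ⧸ H)
    with hφ
  have hkerle : φ.ker ≤ H := by
    rw [hφ, ← Subgroup.normalCore_eq_ker]
    exact Subgroup.normalCore_le H
  have hker : φ.ker = ⊥ := by
    apply aux_normal_eq_bot hp h5 inferInstance
    intro hdvd
    have h1 : p ∣ Nat.card ↥H := hdvd.trans (Subgroup.card_dvd_of_le hkerle)
    exact ((Nat.Prime.coprime_iff_not_dvd hp).mp hcop.symm) h1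
  have hφinj : Function.Injective φ := (MonoidHom.ker_eq_bot_iff φ).mp hker
  haveI : Fintype (↥(alternatingGroup (Fin p)) ⧸ H) := Fintype.ofFinite _
  haveI : DecidableEq (↥(alternatingGroup (Fin p)) ⧸ H) := Classical.decEq _
  have hcardQ : Fintype.card (↥(alternatingGroup (Fin p)) ⧸ H) = p := by
    rw [← Nat.card_eq_fintype_card]
    exact hidx
  -- the range of φ contains the alternating group of the quotient
  have hcardK : Nat.card ↥φ.range = Nat.card ↥(alternatingGroup (Fin p)) :=
    (Nat.card_congr (MonoidHom.ofInjective hφinj).toEquiv).symm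
  have hKindex : φ.range.index = 2 := by
    have h1 : Nat.card ↥φ.range * φ.range.index
        = Nat.card (Equiv.Perm (↥(alternatingGroup (Fin p)) ⧸ H)) :=
      Subgroup.card_mul_index _
    have h2 : Nat.card (Equiv.Perm (↥(alternatingGroup (Fin p)) ⧸ H)) = Nat.factorial p := by
      rw [Nat.card_eq_fintype_card, Fintype.card_perm, hcardQ]
    have h3 : 0 < Nat.card ↥φ.range := Nat.card_pos
    apply Nat.eq_of_mul_eq_mul_left h3
    rw [h1, h2, ← hcardG, hcardK]
    ring
  have haltK : alternatingGroup (↥(alternatingGroup (Fin p)) ⧸ H) ≤ φ.range := by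
    refine le_trans (le_of_eq Equiv.Perm.closure_three_cycles_eq_alternating.symm)
      ((Subgroup.closure_le _).mpr ?_)
    intro σ hσ
    have h3 : σ ^ 3 = 1 := by
      have ho := (hσ : Equiv.Perm.IsThreeCycle σ).orderOf
      rw [← ho]; exact pow_orderOf_eq_one σ
    have hsq := Subgroup.sq_mem_of_index_two hKindex (σ ^ 2)
    have h4 : (σ ^ 2) ^ 2 = σ := by
      rw [← pow_mul]
      norm_num
      rw [show (4 : ℕ) = 3 + 1 by norm_num, pow_succ, h3, one_mul]
    rw [h4] at hsq
    exact hsq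
  exact aux_final H hsolv hφinj haltK (by rw [hcardQ]; omega)
end

section
/- Let q > 7 be an odd prime power such that q + 1 is a power of 2, and let n be a positive integer with 2^n ≤ q + 1. Then there is no injective group homomorphism from PSL_2(q) into GL_n(2), the group of invertible n×n matrices over the field with 2 elements. -/
open Matrix Polynomial
open scoped MatrixGroups

lemma exists_psl_elem (F : Type*) [Field F] [Fintype F] (q s : ℕ) (hF : Fintype.card F = q)
    (hq7 : 7 < q) (hs4 : q + 1 = 4 * s) :
    ∃ h : PSL(2, F), h ^ (2 * s) = 1 ∧ h ^ s ≠ 1 := by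
  have hspos : 0 < s := by omega
  -- the polynomial X^2+1 is irreducible
  set P : F[X] := X ^ 2 + C 1 with hP
  have hmonic : P.Monic := monic_X_pow_add_C 1 (by norm_num)
  have hdeg : P.natDegree = 2 := by
    simpa [hP] using natDegree_X_pow_add_C (n := 2) (r := (1 : F))
  have hnosq : ¬ IsSquare (-1 : F) := by
    rw [FiniteField.isSquare_neg_one_iff, hF]
    omega
  have hirr : Irreducible P := by
    rw [hmonic.irreducible_iff_roots_eq_zero_of_degree_le_three (by omega) (by omega)]
    rw [Multiset.eq_zero_iff_forall_notMem]
    intro r hr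
    rw [mem_roots'] at hr
    apply hnosq
    have := hr.2
    simp only [IsRoot, hP, eval_add, eval_pow, eval_X, eval_C] at this
    exact ⟨r, by rw [← sq]; linear_combination -this⟩
  haveI : Fact (Irreducible P) := ⟨hirr⟩
  set K := AdjoinRoot P with hK
  set pb : PowerBasis F K := AdjoinRoot.powerBasis' hmonic with hpb
  haveI : Module.Finite F K := pb.finite
  have hdim : pb.dim = 2 := hdeg
  set b : Module.Basis (Fin 2) F K := pb.basis.reindex (finCongr hdim) with hb
  letI : Fintype K := Module.fintypeOfFintype b
  have hcard : Fintype.card K = q ^ 2 := by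
    rw [Module.card_eq_pow_finrank (K := F) (V := K), pb.finrank, hdim, hF]
  obtain ⟨ζ, hζ⟩ := IsCyclic.exists_generator (α := Kˣ)
  have horderζ : orderOf ζ = q ^ 2 - 1 := by
    rw [orderOf_eq_card_of_forall_mem_zpowers hζ, Nat.card_units, Nat.card_eq_fintype_card, hcard]
  set g0 : Kˣ := ζ ^ (q - 1) with hg0
  have hfac : q ^ 2 - 1 = (q + 1) * (q - 1) := by
    have : (q + 1) * (q - 1) + 1 = q ^ 2 := by
      obtain ⟨m, rfl⟩ : ∃ m, q = m + 1 := ⟨q - 1, by omega⟩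
      simp only [Nat.add_sub_cancel]
      ring
    omega
  have horder0 : orderOf g0 = q + 1 := by
    rw [hg0, orderOf_pow' _ (by omega : q - 1 ≠ 0), horderζ, hfac,
      Nat.gcd_eq_right ⟨q + 1, by ring⟩, Nat.mul_div_cancel _ (by omega : 0 < q - 1)]
  set v : K := (g0 : K) with hv
  have horderv : orderOf v = q + 1 := by rw [hv, orderOf_units, horder0]
  have hv2s : v ^ (2 * s) = -1 := by
    have hx2 : v ^ (2 * s) * v ^ (2 * s) = 1 := by
      rw [← pow_add]
      have : 2 * s + 2 * s = q + 1 := by omega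
      rw [this, ← horderv, pow_orderOf_eq_one]
    rcases mul_self_eq_one_iff.mp hx2 with h1 | h1
    · exfalso
      have hdvd := orderOf_dvd_of_pow_eq_one h1
      rw [horderv] at hdvd
      have := Nat.le_of_dvd (by omega) hdvd
      omega
    · exact h1
  -- the matrix
  set φ := Algebra.leftMulMatrix b with hφ
  have hφinj : Function.Injective φ := φ.toRingHom.injective
  have hζdet : det (φ ((ζ : K))) ≠ 0 := by
    have : IsUnit (φ ((ζ : K))) := (Units.isUnit ζ).map φ
    exact ((Matrix.isUnit_iff_isUnit_det _).mp this).ne_zero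
  have hdet : det (φ v) = 1 := by
    have hvp : v = ((ζ : K)) ^ (q - 1) := by rw [hv, hg0, Units.val_pow_eq_pow_val]
    rw [hvp, map_pow, det_pow]
    have := FiniteField.pow_card_sub_one_eq_one _ hζdet
    rwa [hF] at this
  set g : SL(2, F) := ⟨φ v, hdet⟩ with hg
  have hgpow : ∀ j : ℕ, ((g ^ j : SL(2, F)) : Matrix (Fin 2) (Fin 2) F) = φ (v ^ j) := by
    intro j
    rw [map_pow]
    rfl
  refine ⟨QuotientGroup.mk' _ g, ?_, ?_⟩
  · rw [← map_pow, QuotientGroup.mk'_apply, QuotientGroup.eq_one_iff]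
    rw [Matrix.SpecialLinearGroup.mem_center_iff]
    refine ⟨-1, by simp, ?_⟩
    rw [hgpow, hv2s]; simp [← Matrix.diagonal_one, ← Matrix.diagonal_neg]
  · intro heq
    rw [← map_pow, QuotientGroup.mk'_apply, QuotientGroup.eq_one_iff,
      Matrix.SpecialLinearGroup.mem_center_iff] at heq
    obtain ⟨r, hr1, hr2⟩ := heq
    rw [hgpow] at hr2
    have hr1' : r = 1 ∨ r = -1 := by
      rw [Fintype.card_fin] at hr1
      exact mul_self_eq_one_iff.mp (by rw [← sq]; exact hr1)
    have hvs : v ^ s = 1 ∨ v ^ s = -1 := by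
      rcases hr1' with rfl | rfl
      · left; apply hφinj; rw [← hr2]; simp [← Matrix.diagonal_one, ← Matrix.diagonal_neg]
      · right; apply hφinj; rw [← hr2]; simp [← Matrix.diagonal_one, ← Matrix.diagonal_neg]
    have : v ^ (2 * s) = 1 := by
      rw [two_mul, pow_add]
      rcases hvs with h | h <;> rw [h] <;> ring
    rw [hv2s] at this
    have hdvd := orderOf_dvd_of_pow_eq_one (this ▸ hv2s : v ^ (2*s) = 1)
    rw [horderv] at hdvd
    have := Nat.le_of_dvd (by omega) hdvd
    omega

lemma le_two_pow_sub_two : ∀ k : ℕ, 4 ≤ k → k ≤ 2 ^ (k - 2) := by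
  intro k hk
  induction k with
  | zero => omega
  | succ m ih =>
    rcases Nat.lt_or_ge m 4 with h | h
    · interval_cases m <;> simp_all <;> omega
    · have h1 := ih (by omega)
      have h2 : m + 1 - 2 = (m - 2) + 1 := by omega
      rw [h2, pow_succ]
      omega

/-- If `q > 7` is an odd prime power with `q + 1` a power of `2`, and `n` is a positive
integer with `2^n ≤ q + 1`, then there is no injective group homomorphism from `PSL₂(q)`
into `GL_n(2)`. -/
theorem no_embedding_psl2_into_gln_2 (q : ℕ) (hq : IsPrimePow q) (hodd : Odd q)
    (hq7 : 7 < q) (hpow : ∃ k : ℕ, q + 1 = 2 ^ k)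
    (n : ℕ) (hn : 0 < n) (hle : 2 ^ n ≤ q + 1)
    (F : Type*) [Field F] [Fintype F] (hF : Fintype.card F = q) :
    ¬ ∃ f : PSL(2, F) →* GL (Fin n) (ZMod 2), Function.Injective f := by
  rintro ⟨f, hf⟩
  obtain ⟨k, hk⟩ := hpow
  have hk4 : 4 ≤ k := by
    by_contra hcon
    have : 2 ^ k ≤ 2 ^ 3 := Nat.pow_le_pow_right (by norm_num) (by omega)
    omega
  set s : ℕ := 2 ^ (k - 2) with hsdef
  have hs4 : q + 1 = 4 * s := by
    have hpa := pow_add 2 (k - 2) 2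
    rw [Nat.sub_add_cancel (by omega : 2 ≤ k)] at hpa
    omega
  obtain ⟨h, h1, h2⟩ := exists_psl_elem F q s hF hq7 hs4
  have hnk : n ≤ k := by
    rw [hk] at hle
    exact (Nat.pow_le_pow_iff_right (by norm_num)).mp hle
  have hns : n ≤ s := hnk.trans (le_two_pow_sub_two k hk4)
  set M : Matrix (Fin n) (Fin n) (ZMod 2) := ((f h : GL (Fin n) (ZMod 2)) : Matrix (Fin n) (Fin n) (ZMod 2)) with hM
  have hM1 : M ^ (2 * s) = 1 := by
    rw [hM, ← Units.val_pow_eq_pow_val, ← map_pow, h1, map_one f, Units.val_one]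
  have hM2 : M ^ s ≠ 1 := by
    intro hcon
    apply h2
    apply hf
    rw [map_pow, map_one f]
    ext
    rw [Units.val_pow_eq_pow_val, ← hM, hcon, Units.val_one]
  haveI : Nonempty (Fin n) := Fin.pos_iff_nonempty.mp hn
  have htwo : (1 + 1 : Matrix (Fin n) (Fin n) (ZMod 2)) = 0 := by
    rw [one_add_one_eq_two]
    exact_mod_cast CharP.cast_eq_zero (Matrix (Fin n) (Fin n) (ZMod 2)) 2
  have h2s : 2 * s = 2 ^ (k - 1) := by
    have hpa := pow_add 2 (k - 2) 1
    rw [show k - 2 + 1 = k - 1 from by omega] at hpa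
    omega
  have hadd : ∀ j : ℕ, (M + 1) ^ (2 ^ j) = M ^ (2 ^ j) + 1 := by
    intro j
    rw [add_pow_char_pow_of_commute 2 j (Commute.one_right M), one_pow]
  have hN : (M + 1) ^ (2 * s) = 0 := by
    rw [h2s, hadd, ← h2s, hM1, htwo]
  have hnil : IsNilpotent (M + 1) := ⟨2 * s, hN⟩
  have hcp : (M + 1).charpoly = X ^ n := by
    have := Matrix.isNilpotent_charpoly_sub_pow_of_isNilpotent hnil
    have h0 : (M + 1).charpoly - X ^ Fintype.card (Fin n) = 0 := this.eq_zero
    rw [sub_eq_zero] at h0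
    rwa [Fintype.card_fin] at h0
  have hNn : (M + 1) ^ n = 0 := by
    have := Matrix.aeval_self_charpoly (M + 1)
    rwa [hcp, map_pow, aeval_X] at this
  have hNs : (M + 1) ^ s = 0 := pow_eq_zero_of_le hns hNn
  have : M ^ s + 1 = 0 := by
    rw [hsdef] at hNs ⊢
    rw [← hadd, hNs]
  apply hM2
  have : M ^ s = M ^ s + (1 + 1) := by rw [htwo, add_zero]
  rw [this, ← add_assoc] at *
  rw [‹M ^ s + 1 = 0›, zero_add]
end

section
/- Let q > 4 be a power of 2 and let p be an odd prime such that q + 1 is a power of p, and let n be a positive integer with p^n ≤ q + 1. Then there is no injective group homomorphism from PSL_2(q) into GL_n(p), the group of invertible n×n matrices over the field with p elements. -/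
open Matrix
open scoped MatrixGroups

lemma my_geom_sum (p : ℕ) (hp : 1 ≤ p) (k : ℕ) :
    (∑ i ∈ Finset.range k, p ^ i) * (p - 1) + 1 = p ^ k := by
  induction k with
  | zero => simp
  | succ k ih =>
    rw [Finset.sum_range_succ, add_mul, pow_succ]
    have h2 : p ^ k * (p - 1) + p ^ k = p ^ k * p := by
      cases p with
      | zero => omega
      | succ m => simp only [Nat.add_sub_cancel]; ring
    omega

lemma my_geom_sum_parity (p : ℕ) (hp : Odd p) (k : ℕ) :
    (∑ i ∈ Finset.range k, p ^ i) % 2 = k % 2 := by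
  induction k with
  | zero => simp
  | succ k ih =>
    rw [Finset.sum_range_succ]
    have : p ^ k % 2 = 1 := Nat.odd_iff.mp (hp.pow)
    omega

lemma my_nt {m p k : ℕ} (hm : 3 ≤ m) (hp : p.Prime) (hpodd : Odd p)
    (h : 2 ^ m + 1 = p ^ k) : k = 1 ∨ (p = 3 ∧ k = 2 ∧ m = 3) := by
  have hp3 : 3 ≤ p := by
    rcases hp.two_le.lt_or_eq with h' | h'
    · omega
    · exfalso; rw [← h'] at hpodd; exact (Nat.not_odd_iff_even.mpr even_two) hpodd
  have h2m : 8 ≤ 2 ^ m := by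
    calc (8:ℕ) = 2 ^ 3 := by norm_num
    _ ≤ 2 ^ m := Nat.pow_le_pow_right (by norm_num) hm
  have hk0 : k ≠ 0 := by rintro rfl; rw [pow_zero] at h; omega
  by_cases hk1 : k = 1
  · exact Or.inl hk1
  have hk2 : 2 ≤ k := by omega
  right
  -- k is even
  have hgs := my_geom_sum p (by omega) k
  have hpar := my_geom_sum_parity p hpodd k
  set S := ∑ i ∈ Finset.range k, p ^ i with hS
  have hSdvd : S ∣ 2 ^ m := ⟨p - 1, by omega⟩
  obtain ⟨b, hble, hSb⟩ := (Nat.dvd_prime_pow Nat.prime_two).mp hSdvd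
  have hSge : 1 + p ≤ S := by
    have hsub : ({0, 1} : Finset ℕ) ⊆ Finset.range k := by
      intro x hx; simp at hx; rcases hx with rfl | rfl <;> simp <;> omega
    calc 1 + p = ∑ i ∈ ({0,1} : Finset ℕ), p ^ i := by simp
    _ ≤ S := Finset.sum_le_sum_of_subset hsub
  have hSeven : 2 ∣ S := by
    rcases Nat.eq_zero_or_pos b with rfl | hb
    · rw [pow_zero] at hSb; omega
    · exact hSb ▸ dvd_pow_self 2 (by omega)
  have hkeven : k % 2 = 0 := by omega
  obtain ⟨j, rfl⟩ : ∃ j, k = 2 * j := ⟨k / 2, by omega⟩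
  have hj1 : 1 ≤ j := by omega
  -- factor p^(2j) - 1
  have ha : 3 ≤ p ^ j := le_trans hp3 (Nat.le_self_pow (by omega) p)
  have hsq : p ^ j * p ^ j = 2 ^ m + 1 := by
    rw [← pow_add, h]; congr 1; ring
  obtain ⟨t, ht⟩ : ∃ t, p ^ j = t + 3 := ⟨p ^ j - 3, by omega⟩
  have hfac : (p ^ j - 1) * (p ^ j + 1) = 2 ^ m := by
    rw [ht] at hsq ⊢
    have h' : t + 3 - 1 = t + 2 := by omega
    rw [h']
    have e1 : (t + 3) * (t + 3) = t * t + 6 * t + 9 := by ring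
    have e2 : (t + 2) * (t + 3 + 1) = t * t + 6 * t + 8 := by ring
    omega
  have hd1 : p ^ j - 1 ∣ 2 ^ m := ⟨p ^ j + 1, hfac.symm⟩
  have hd2 : p ^ j + 1 ∣ 2 ^ m := ⟨p ^ j - 1, by rw [← hfac]; ring⟩
  obtain ⟨c, hcle, hc⟩ := (Nat.dvd_prime_pow Nat.prime_two).mp hd1
  obtain ⟨d, hdle, hd⟩ := (Nat.dvd_prime_pow Nat.prime_two).mp hd2
  have hc1 : 1 ≤ c := by
    rcases Nat.eq_zero_or_pos c with rfl | hcpos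
    · rw [pow_zero] at hc; omega
    · omega
  have hcpos : 0 < 2 ^ c := pow_pos (by norm_num) c
  have hdpos : 0 < 2 ^ d := pow_pos (by norm_num) d
  have hcd : 2 ^ c + 2 = 2 ^ d := by omega
  have hc2 : c = 1 := by
    by_contra hne
    have hc2' : 2 ≤ c := by omega
    have h4c : 4 ∣ 2 ^ c := by
      calc (4:ℕ) = 2 ^ 2 := by norm_num
      _ ∣ 2 ^ c := pow_dvd_pow 2 hc2'
    have hd3 : 2 ≤ d := by
      by_contra hd3
      interval_cases d <;> omega
    have h4d : 4 ∣ 2 ^ d := by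
      calc (4:ℕ) = 2 ^ 2 := by norm_num
      _ ∣ 2 ^ d := pow_dvd_pow 2 hd3
    omega
  have ha3 : p ^ j = 3 := by rw [hc2, pow_one] at hc; omega
  have hpj : p = 3 ∧ j = 1 := by
    have hpdvd : p ∣ 3 := ha3 ▸ dvd_pow_self p (by omega : j ≠ 0)
    have hp3' : p = 3 := by
      rcases (Nat.Prime.eq_one_or_self_of_dvd (by norm_num) p hpdvd) with h' | h'
      · omega
      · exact h'
    refine ⟨hp3', ?_⟩
    by_contra hj2
    have hj2' : 2 ≤ j := by omega
    have h9 : (9:ℕ) ≤ p ^ j := by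
      rw [hp3']
      calc (9:ℕ) = 3 ^ 2 := by norm_num
      _ ≤ 3 ^ j := Nat.pow_le_pow_right (by norm_num) hj2'
    omega
  have hm3 : m = 3 := by
    rw [ha3] at hfac
    norm_num at hfac
    have h8 : (2:ℕ) ^ m = 2 ^ 3 := by rw [hfac.symm]; norm_num
    exact Nat.pow_right_injective (le_refl 2) h8
  exact ⟨hpj.1, by omega, hm3⟩

lemma sq_sub_one_fac (Q : ℕ) (hQ : 1 ≤ Q) : (Q + 1) * (Q - 1) = Q ^ 2 - 1 := by
  obtain ⟨s, rfl⟩ : ∃ s, Q = s + 1 := ⟨Q - 1, by omega⟩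
  have e1 : (s + 1 + 1) * (s + 1 - 1) = s * s + 2 * s := by
    simp only [Nat.add_sub_cancel]; ring
  have e2 : (s + 1) ^ 2 = s * s + 2 * s + 1 := by ring
  omega

lemma my_det_surj (F : Type*) [Field F] [Fintype F] [DecidableEq F] :
    Function.Surjective (Matrix.GeneralLinearGroup.det : GL (Fin 2) F →* Fˣ) := by
  intro u
  refine ⟨Matrix.GeneralLinearGroup.mkOfDetNeZero (Matrix.diagonal ![(u : F), 1]) ?_, ?_⟩
  · rw [Matrix.det_diagonal, Fin.prod_univ_two]
    simp
  · ext
    simp [Matrix.GeneralLinearGroup.mkOfDetNeZero, Matrix.GeneralLinearGroup.mk',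
      Matrix.unitOfDetInvertible, Matrix.det_diagonal, Fin.prod_univ_two]

lemma my_card_SL_mul_units (F : Type*) [Field F] [Fintype F] [DecidableEq F] :
    Nat.card (GL (Fin 2) F) = Nat.card Fˣ * Nat.card SL(2, F) := by
  classical
  set d := (Matrix.GeneralLinearGroup.det : GL (Fin 2) F →* Fˣ) with hd
  have e1 : (GL (Fin 2) F ⧸ d.ker) ≃ Fˣ :=
    (QuotientGroup.quotientKerEquivOfSurjective d (my_det_surj F)).toEquiv
  have e2 : SL(2, F) ≃ d.ker :=
    { toFun := fun A => ⟨Matrix.SpecialLinearGroup.toGL A, by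
        simp only [MonoidHom.mem_ker, hd]
        exact Matrix.SpecialLinearGroup.coeToGL_det A⟩
      invFun := fun g => ⟨(g : GL (Fin 2) F).val, by
        have hg : d (g : GL (Fin 2) F) = 1 := g.2
        have := congrArg Units.val hg
        simpa [hd] using this⟩
      left_inv := fun A => rfl
      right_inv := fun g => Subtype.ext (Units.ext rfl) }
  rw [Subgroup.card_eq_card_quotient_mul_card_subgroup d.ker,
    Nat.card_congr e1, Nat.card_congr e2.symm]

lemma my_center_card_le (F : Type*) [Field F] :
    Nat.card (Subgroup.center SL(2, F)) ≤ 2 := by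
  have e := (Matrix.SpecialLinearGroup.center_equiv_rootsOfUnity' (R := F) (0 : Fin 2)).toEquiv
  rw [Nat.card_congr e]
  rw [Fintype.card_fin]
  exact card_rootsOfUnity F 2

/-- If `q > 4` is a power of `2`, `p` is an odd prime with `q + 1` a power of `p`, and `n`
is a positive integer with `p^n ≤ q + 1`, then there is no injective group homomorphism
from `PSL₂(q)` into `GL_n(p)`. -/
theorem no_embedding_psl2_even_into_gln_p (q p : ℕ) (hq2 : ∃ m : ℕ, q = 2 ^ m)
    (hq4 : 4 < q) (hp : p.Prime) (hpodd : Odd p) (hpow : ∃ k : ℕ, q + 1 = p ^ k)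
    (n : ℕ) (hn : 0 < n) (hle : p ^ n ≤ q + 1)
    (F : Type*) [Field F] [Fintype F] (hF : Fintype.card F = q) :
    ¬ ∃ f : PSL(2, F) →* GL (Fin n) (ZMod p), Function.Injective f := by
  classical
  rintro ⟨f, hf⟩
  obtain ⟨m, rfl⟩ := hq2
  obtain ⟨k, hk⟩ := hpow
  have hm : 3 ≤ m := by
    by_contra hm'
    have h4 : 2 ^ m ≤ 4 := by
      calc 2 ^ m ≤ 2 ^ 2 := Nat.pow_le_pow_right (by norm_num) (by omega)
      _ = 4 := by norm_num
    omega
  have h2m : 8 ≤ 2 ^ m := by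
    calc (8:ℕ) = 2 ^ 3 := by norm_num
    _ ≤ 2 ^ m := Nat.pow_le_pow_right (by norm_num) hm
  have hp3 : 3 ≤ p := by
    rcases hp.two_le.lt_or_eq with h' | h'
    · omega
    · exfalso; rw [← h'] at hpodd; exact (Nat.not_odd_iff_even.mpr even_two) hpodd
  have hk1 : 1 ≤ k := by
    by_contra hk0
    have : k = 0 := by omega
    rw [this, pow_zero] at hk; omega
  haveI : NeZero p := ⟨hp.ne_zero⟩
  haveI : Fact p.Prime := ⟨hp⟩
  -- p^k divides the card of GL(2, F)
  have hGLcard : Nat.card (GL (Fin 2) F) =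
      ((2 ^ m) ^ 2 - (2 ^ m) ^ 0) * ((2 ^ m) ^ 2 - (2 ^ m) ^ 1) := by
    have h := Matrix.card_GL_field (𝔽 := F) (n := 2)
    rw [hF] at h
    rw [h, Fin.prod_univ_two]
    norm_num
  have hdvdGL2 : p ^ k ∣ Nat.card (GL (Fin 2) F) := by
    rw [hGLcard]
    apply dvd_mul_of_dvd_left
    have : (2 ^ m) ^ 2 - (2 ^ m) ^ 0 = (2 ^ m + 1) * (2 ^ m - 1) := by
      rw [sq_sub_one_fac (2 ^ m) (by omega), pow_zero]
    rw [this, hk]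
    exact dvd_mul_right _ _
  -- p^k divides the card of SL(2, F)
  have hSLmul := my_card_SL_mul_units F
  have hU : Nat.card Fˣ = 2 ^ m - 1 := by
    rw [Nat.card_eq_fintype_card, Fintype.card_units, hF]
  have hpcop2 : Nat.Coprime p (2 ^ m - 1) := by
    rw [Nat.Prime.coprime_iff_not_dvd hp]
    intro hdvd
    have hdvd' : p ∣ 2 ^ m + 1 := hk ▸ dvd_pow_self p (by omega : k ≠ 0)
    have h2 : p ∣ 2 := by
      have hsub := Nat.dvd_sub hdvd' hdvd
      have he : 2 ^ m + 1 - (2 ^ m - 1) = 2 := by omega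
      rwa [he] at hsub
    have := Nat.le_of_dvd (by norm_num) h2
    omega
  have hdvdSL : p ^ k ∣ Nat.card SL(2, F) := by
    have hcop : Nat.Coprime (p ^ k) (2 ^ m - 1) := Nat.Coprime.pow_left k hpcop2
    have h' : p ^ k ∣ (2 ^ m - 1) * Nat.card SL(2, F) := by
      rw [← hU, ← hSLmul]; exact hdvdGL2
    exact hcop.dvd_of_dvd_mul_left h'
  -- p^k divides the card of PSL(2, F)
  have hSLq : Nat.card SL(2, F) =
      Nat.card PSL(2, F) * Nat.card (Subgroup.center SL(2, F)) :=
    Subgroup.card_eq_card_quotient_mul_card_subgroup (Subgroup.center SL(2, F))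
  have hcent_pos : 0 < Nat.card (Subgroup.center SL(2, F)) := Nat.card_pos
  have hcent_le := my_center_card_le F
  have hcopc : Nat.Coprime (p ^ k) (Nat.card (Subgroup.center SL(2, F))) := by
    have hcase : Nat.card (Subgroup.center SL(2, F)) = 1 ∨
        Nat.card (Subgroup.center SL(2, F)) = 2 := by omega
    rcases hcase with h' | h'
    · rw [h']; exact Nat.coprime_one_right _
    · rw [h']
      have : Odd (p ^ k) := hpodd.pow
      exact Nat.coprime_two_right.mpr this
  have hdvdPSL : p ^ k ∣ Nat.card PSL(2, F) := by
    apply hcopc.dvd_of_dvd_mul_right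
    rw [← hSLq]; exact hdvdSL
  -- card PSL divides card of the target GL
  have hdvdT : Nat.card PSL(2, F) ∣ Nat.card (GL (Fin n) (ZMod p)) := by
    have hr : Nat.card PSL(2, F) = Nat.card f.range :=
      Nat.card_congr (MonoidHom.ofInjective hf).toEquiv
    rw [hr]
    exact Subgroup.card_subgroup_dvd_card f.range
  have hfinal : p ^ k ∣ Nat.card (GL (Fin n) (ZMod p)) := hdvdPSL.trans hdvdT
  have hTcard : Nat.card (GL (Fin n) (ZMod p)) = ∏ i : Fin n, (p ^ n - p ^ (i : ℕ)) := by
    have h := Matrix.card_GL_field (𝔽 := ZMod p) (n := n)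
    rwa [ZMod.card] at h
  have hnk : n ≤ k := by
    have hle' : p ^ n ≤ p ^ k := hk ▸ hle
    exact (Nat.pow_le_pow_iff_right (by omega)).mp hle'
  rcases my_nt hm hp hpodd hk with hke | ⟨hp3', hk2, hm3⟩
  · -- k = 1, so n = 1 and p divides p - 1
    have hn1 : n = 1 := by omega
    subst hn1 hke
    rw [hTcard, Fin.prod_univ_one, pow_one] at hfinal
    norm_num at hfinal
    have hple : p ≤ p - 1 := by omega
    omega
  · -- p = 3, k = 2, m = 3, n ≤ 2
    subst hp3' hk2 hm3
    interval_cases n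
    · rw [hTcard, Fin.prod_univ_one, pow_one] at hfinal
      norm_num at hfinal
    · rw [hTcard, Fin.prod_univ_two] at hfinal
      norm_num at hfinal
end
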